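/- For every a₀ > 0 and every integer N ≥ 2 there exists ε₀ ∈ (0,1) such that: for every ε ∈ (0, ε₀] and every P : ℤ → ℂ with |P(q)| ≤ ε for all q ∈ ℤ and |P(q)| ≤ a₀/q² for all q ≠ 0, one has |S(1,n,P)(q)| ≤ |q|^{−(1 + 4^{−(n−1)})} for every integer n with 2 ≤ n ≤ N and every q ∈ ℤ with q ≠ 0. -/

import Mathlib

/-- `Sconv P n` is the `n`-fold self-convolution of the sequence `P : ℤ → ℂ`:
`Sconv P 1 = P` and `Sconv P n = P * Sconv P (n-1)` (convolution on `ℤ`). -/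
noncomputable def Sconv (P : ℤ → ℂ) : ℕ → ℤ → ℂ
  | 0 => fun _ => 0
  | 1 => P
  | (n + 2) => fun q => ∑' k : ℤ, P (q - k) * Sconv P (n + 1) k

open Real

private def shearEquiv : ℤ × ℤ ≃ ℤ × ℤ where
  toFun p := (p.1 + p.2, p.2)
  invFun p := (p.1 - p.2, p.2)
  left_inv p := by simp
  right_inv p := by simp

private lemma summable_F {f g : ℤ → ℂ} (hf : Summable fun q => ‖f q‖)
    (hg : Summable fun q => ‖g q‖) :
    Summable (fun p : ℤ × ℤ => ‖f (p.1 - p.2)‖ * ‖g p.2‖) := by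
  have h := hf.mul_of_nonneg hg (fun _ => norm_nonneg _) (fun _ => norm_nonneg _)
  apply shearEquiv.summable_iff.mp
  refine h.congr fun p => ?_
  simp [shearEquiv, Function.comp]

private lemma tsum_shift (f : ℤ → ℂ) (q : ℤ) :
    ∑' k : ℤ, ‖f (q - k)‖ = ∑' m : ℤ, ‖f m‖ :=
  (Equiv.subLeft q).tsum_eq (fun m => ‖f m‖)

private lemma summable_shift {f : ℤ → ℂ} (hf : Summable fun q => ‖f q‖) (q : ℤ) :
    Summable fun k : ℤ => ‖f (q - k)‖ :=
  hf.comp_injective (fun a b h => by omega)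

private lemma conv_bound (f g : ℤ → ℂ) (hf : Summable fun q => ‖f q‖)
    (hg : Summable fun q => ‖g q‖)
    (Cf Cg : ℝ) (hCf : 0 ≤ Cf) (hCg : 0 ≤ Cg)
    (hfd : ∀ q : ℤ, q ≠ 0 → ‖f q‖ ≤ Cf / (q : ℝ) ^ 2)
    (hgd : ∀ q : ℤ, q ≠ 0 → ‖g q‖ ≤ Cg / (q : ℝ) ^ 2) :
    (Summable fun q : ℤ => ‖∑' k : ℤ, f (q - k) * g k‖) ∧
    ((∑' q : ℤ, ‖∑' k : ℤ, f (q - k) * g k‖) ≤ (∑' q : ℤ, ‖f q‖) * (∑' q : ℤ, ‖g q‖)) ∧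
    (∀ q : ℤ, q ≠ 0 → ‖∑' k : ℤ, f (q - k) * g k‖ ≤
      4 / (q : ℝ) ^ 2 * (Cg * (∑' q : ℤ, ‖f q‖) + Cf * (∑' q : ℤ, ‖g q‖))) := by
  have hF : Summable (fun p : ℤ × ℤ => ‖f (p.1 - p.2)‖ * ‖g p.2‖) := summable_F hf hg
  have hsec : ∀ q : ℤ, Summable fun k : ℤ => ‖f (q - k)‖ * ‖g k‖ := fun q => hF.prod_factor q
  have hsec' : ∀ q : ℤ, Summable fun k : ℤ => ‖f (q - k) * g k‖ := by
    intro q; refine (hsec q).congr fun k => ?_; rw [norm_mul]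
  have hnorm : ∀ q : ℤ, ‖∑' k : ℤ, f (q - k) * g k‖ ≤ ∑' k : ℤ, ‖f (q - k)‖ * ‖g k‖ := by
    intro q
    calc ‖∑' k : ℤ, f (q - k) * g k‖ ≤ ∑' k : ℤ, ‖f (q - k) * g k‖ :=
          norm_tsum_le_tsum_norm (hsec' q)
      _ = ∑' k : ℤ, ‖f (q - k)‖ * ‖g k‖ := by
          exact tsum_congr fun k => norm_mul _ _
  have houter : Summable fun q : ℤ => ∑' k : ℤ, ‖f (q - k)‖ * ‖g k‖ := hF.prod
  have hsummable : Summable fun q : ℤ => ‖∑' k : ℤ, f (q - k) * g k‖ :=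
    Summable.of_nonneg_of_le (fun q => norm_nonneg _) hnorm houter
  refine ⟨hsummable, ?_, ?_⟩
  · calc (∑' q : ℤ, ‖∑' k : ℤ, f (q - k) * g k‖)
        ≤ ∑' q : ℤ, ∑' k : ℤ, ‖f (q - k)‖ * ‖g k‖ := Summable.tsum_le_tsum hnorm hsummable houter
      _ = ∑' p : ℤ × ℤ, ‖f (p.1 - p.2)‖ * ‖g p.2‖ := (Summable.tsum_prod hF).symm
      _ = ∑' p : ℤ × ℤ, ‖f p.1‖ * ‖g p.2‖ := by
          rw [← shearEquiv.tsum_eq (fun p : ℤ × ℤ => ‖f (p.1 - p.2)‖ * ‖g p.2‖)]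
          exact tsum_congr fun p => by simp [shearEquiv]
      _ = (∑' q : ℤ, ‖f q‖) * (∑' q : ℤ, ‖g q‖) := by
          rw [tsum_mul_tsum_of_summable_norm (by simpa using hf) (by simpa using hg)]
  · intro q hq
    have hq2 : (0 : ℝ) < (q : ℝ) ^ 2 := by positivity
    have key : ∀ k : ℤ, ‖f (q - k)‖ * ‖g k‖ ≤
        4 / (q : ℝ) ^ 2 * (Cg * ‖f (q - k)‖ + Cf * ‖g k‖) := by
      intro k
      rcases le_or_gt (|q|) (2 * |k|) with h | h
      · have hk : k ≠ 0 := by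
          intro h0
          apply hq
          subst h0
          simp only [abs_zero, mul_zero] at h
          exact abs_eq_zero.mp (le_antisymm h (abs_nonneg q))
        have hk2i : q ^ 2 ≤ 4 * k ^ 2 := by
          nlinarith [sq_abs q, sq_abs k, abs_nonneg q, abs_nonneg k]
        have hk2 : (q : ℝ) ^ 2 ≤ 4 * (k : ℝ) ^ 2 := by exact_mod_cast hk2i
        have hgk : ‖g k‖ ≤ 4 * Cg / (q : ℝ) ^ 2 := by
          have := hgd k hk
          have hk2' : (0 : ℝ) < (k : ℝ) ^ 2 := by
            have : (k : ℝ) ≠ 0 := Int.cast_ne_zero.mpr hk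
            positivity
          calc ‖g k‖ ≤ Cg / (k : ℝ) ^ 2 := hgd k hk
            _ ≤ 4 * Cg / (q : ℝ) ^ 2 := by
                rw [div_le_div_iff₀ hk2' hq2]; nlinarith
        calc ‖f (q - k)‖ * ‖g k‖ ≤ ‖f (q - k)‖ * (4 * Cg / (q : ℝ) ^ 2) := by
              exact mul_le_mul_of_nonneg_left hgk (norm_nonneg _)
          _ ≤ 4 / (q : ℝ) ^ 2 * (Cg * ‖f (q - k)‖ + Cf * ‖g k‖) := by
              have h1 : 0 ≤ Cf * ‖g k‖ := mul_nonneg hCf (norm_nonneg _)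
              have h2 : (0:ℝ) < 4 / (q:ℝ)^2 := by positivity
              rw [mul_add]
              have : ‖f (q - k)‖ * (4 * Cg / (q : ℝ) ^ 2) = 4 / (q:ℝ)^2 * (Cg * ‖f (q - k)‖) := by
                field_simp
              rw [this]
              nlinarith
      · have hqk : q - k ≠ 0 := by
          intro h0
          have hqk' : q = k := by omega
          rw [hqk'] at h
          linarith [abs_nonneg k]
        have hk2i : q ^ 2 ≤ 4 * (q - k) ^ 2 := by
          nlinarith [sq_abs q, sq_abs (q - k), abs_nonneg q, abs_nonneg (q - k),
            abs_sub_abs_le_abs_sub q k]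
        have hk2 : (q : ℝ) ^ 2 ≤ 4 * ((q : ℝ) - (k : ℝ)) ^ 2 := by exact_mod_cast hk2i
        have hfk : ‖f (q - k)‖ ≤ 4 * Cf / (q : ℝ) ^ 2 := by
          have hqk2 : (0 : ℝ) < ((q : ℝ) - (k : ℝ)) ^ 2 := by
            have : ((q - k : ℤ) : ℝ) ≠ 0 := Int.cast_ne_zero.mpr hqk
            push_cast at this
            positivity
          calc ‖f (q - k)‖ ≤ Cf / ((q - k : ℤ) : ℝ) ^ 2 := hfd _ hqk
            _ = Cf / ((q : ℝ) - (k : ℝ)) ^ 2 := by push_cast; ring_nf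
            _ ≤ 4 * Cf / (q : ℝ) ^ 2 := by
                rw [div_le_div_iff₀ hqk2 hq2]; nlinarith
        calc ‖f (q - k)‖ * ‖g k‖ ≤ (4 * Cf / (q : ℝ) ^ 2) * ‖g k‖ := by
              exact mul_le_mul_of_nonneg_right hfk (norm_nonneg _)
          _ ≤ 4 / (q : ℝ) ^ 2 * (Cg * ‖f (q - k)‖ + Cf * ‖g k‖) := by
              have h1 : 0 ≤ Cg * ‖f (q - k)‖ := mul_nonneg hCg (norm_nonneg _)
              have h2 : (0:ℝ) < 4 / (q:ℝ)^2 := by positivity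
              rw [mul_add]
              have : (4 * Cf / (q : ℝ) ^ 2) * ‖g k‖ = 4 / (q:ℝ)^2 * (Cf * ‖g k‖) := by
                field_simp
              rw [this]
              nlinarith
    have hmaj : Summable fun k : ℤ => 4 / (q : ℝ) ^ 2 * (Cg * ‖f (q - k)‖ + Cf * ‖g k‖) :=
      (((summable_shift hf q).mul_left Cg).add (hg.mul_left Cf)).mul_left _
    calc ‖∑' k : ℤ, f (q - k) * g k‖ ≤ ∑' k : ℤ, ‖f (q - k)‖ * ‖g k‖ := hnorm q
      _ ≤ ∑' k : ℤ, 4 / (q : ℝ) ^ 2 * (Cg * ‖f (q - k)‖ + Cf * ‖g k‖) :=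
          Summable.tsum_le_tsum key (hsec q) hmaj
      _ = 4 / (q : ℝ) ^ 2 * (Cg * (∑' q : ℤ, ‖f q‖) + Cf * (∑' q : ℤ, ‖g q‖)) := by
          rw [tsum_mul_left, Summable.tsum_add ((summable_shift hf q).mul_left Cg) (hg.mul_left Cf),
            tsum_mul_left, tsum_mul_left, tsum_shift]

private lemma Pl1 (ε a₀ : ℝ) (hε : 0 < ε) (hε1 : ε ≤ 1) (ha₀ : 0 < a₀) (P : ℤ → ℂ)
    (h1 : ∀ q : ℤ, ‖P q‖ ≤ ε) (h2 : ∀ q : ℤ, q ≠ 0 → ‖P q‖ ≤ a₀ / (q : ℝ) ^ 2) :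
    Summable (fun q : ℤ => ‖P q‖) ∧
    ∑' q : ℤ, ‖P q‖ ≤
      ε ^ ((1:ℝ)/4) * (1 + a₀ ^ ((3:ℝ)/4) * ∑' q : ℤ, |(q:ℝ)| ^ (-(3/2) : ℝ)) := by
  set c : ℝ := ε ^ ((1:ℝ)/4) * a₀ ^ ((3:ℝ)/4) with hc
  have hcpos : 0 < c := mul_pos (rpow_pos_of_pos hε _) (rpow_pos_of_pos ha₀ _)
  set g : ℤ → ℝ := fun q => (if q = 0 then ε else 0) + c * |(q:ℝ)| ^ (-(3/2) : ℝ) with hg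
  have hK : Summable (fun q : ℤ => |(q:ℝ)| ^ (-(3/2) : ℝ)) := by
    exact Real.summable_abs_int_rpow (by norm_num)
  have hgsum : Summable g :=
    ((hasSum_ite_eq (0:ℤ) ε).summable).add (hK.mul_left c)
  have hptw : ∀ q : ℤ, ‖P q‖ ≤ g q := by
    intro q
    rcases eq_or_ne q 0 with rfl | hq
    · simp only [hg, if_pos rfl]
      have : |((0:ℤ):ℝ)| ^ (-(3/2) : ℝ) = 0 := by
        norm_num
      rw [this, mul_zero, add_zero]
      exact h1 0
    · have hq2 : (0:ℝ) < (q:ℝ)^2 := by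
        have : (q:ℝ) ≠ 0 := Int.cast_ne_zero.mpr hq
        positivity
      set b : ℝ := a₀ / (q:ℝ)^2 with hb
      have hbpos : 0 < b := div_pos ha₀ hq2
      have hmin : ‖P q‖ ≤ min ε b := le_min (h1 q) (h2 q hq)
      have hmpos : 0 < min ε b := lt_min hε hbpos
      have key : min ε b ≤ ε ^ ((1:ℝ)/4) * b ^ ((3:ℝ)/4) := by
        have e1 : min ε b = (min ε b) ^ ((1:ℝ)/4) * (min ε b) ^ ((3:ℝ)/4) := by
          rw [← Real.rpow_add hmpos]
          norm_num
        rw [e1]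
        exact mul_le_mul (Real.rpow_le_rpow hmpos.le (min_le_left _ _) (by norm_num))
          (Real.rpow_le_rpow hmpos.le (min_le_right _ _) (by norm_num))
          (Real.rpow_nonneg hmpos.le _) (Real.rpow_nonneg hε.le _)
      have e2 : b ^ ((3:ℝ)/4) = a₀ ^ ((3:ℝ)/4) * |(q:ℝ)| ^ (-(3/2) : ℝ) := by
        rw [hb, Real.div_rpow ha₀.le (sq_nonneg _)]
        have e3 : ((q:ℝ)^2) ^ ((3:ℝ)/4) = |(q:ℝ)| ^ ((3/2) : ℝ) := by
          rw [← sq_abs, ← Real.rpow_natCast |(q:ℝ)| 2, ← Real.rpow_mul (abs_nonneg _)]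
          norm_num
        rw [e3, div_eq_mul_inv, ← Real.rpow_neg (abs_nonneg _)]
      have : ‖P q‖ ≤ c * |(q:ℝ)| ^ (-(3/2) : ℝ) := by
        calc ‖P q‖ ≤ min ε b := hmin
          _ ≤ ε ^ ((1:ℝ)/4) * b ^ ((3:ℝ)/4) := key
          _ = c * |(q:ℝ)| ^ (-(3/2) : ℝ) := by rw [e2, hc]; ring
      simp only [hg, if_neg hq, zero_add]
      exact this
  have hPsum : Summable (fun q : ℤ => ‖P q‖) :=
    Summable.of_nonneg_of_le (fun _ => norm_nonneg _) hptw hgsum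
  refine ⟨hPsum, ?_⟩
  have hKnn : 0 ≤ ∑' q : ℤ, |(q:ℝ)| ^ (-(3/2) : ℝ) :=
    tsum_nonneg fun q => Real.rpow_nonneg (abs_nonneg _) _
  calc ∑' q : ℤ, ‖P q‖ ≤ ∑' q : ℤ, g q := Summable.tsum_le_tsum hptw hPsum hgsum
    _ = ε + c * ∑' q : ℤ, |(q:ℝ)| ^ (-(3/2) : ℝ) := by
        rw [hg, Summable.tsum_add ((hasSum_ite_eq (0:ℤ) ε).summable) (hK.mul_left c),
          (hasSum_ite_eq (0:ℤ) ε).tsum_eq, tsum_mul_left]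
    _ ≤ ε ^ ((1:ℝ)/4) * (1 + a₀ ^ ((3:ℝ)/4) * ∑' q : ℤ, |(q:ℝ)| ^ (-(3/2) : ℝ)) := by
        have hεle : ε ≤ ε ^ ((1:ℝ)/4) := by
          nth_rewrite 1 [← Real.rpow_one ε]
          exact Real.rpow_le_rpow_of_exponent_ge hε hε1 (by norm_num)
        rw [mul_add, mul_one, hc]
        have : c * ∑' q : ℤ, |(q:ℝ)| ^ (-(3/2) : ℝ) =
            ε ^ ((1:ℝ)/4) * (a₀ ^ ((3:ℝ)/4) * ∑' q : ℤ, |(q:ℝ)| ^ (-(3/2) : ℝ)) := by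
          rw [hc]; ring
        rw [← hc, this]
        linarith
theorem stmt4 (a₀ : ℝ) (ha₀ : 0 < a₀) (N : ℕ) (hN : 2 ≤ N) :
    ∃ ε₀ ∈ Set.Ioo (0 : ℝ) 1,
      ∀ ε : ℝ, ε ∈ Set.Ioc (0 : ℝ) ε₀ →
      ∀ P : ℤ → ℂ,
        (∀ q : ℤ, ‖P q‖ ≤ ε) →
        (∀ q : ℤ, q ≠ 0 → ‖P q‖ ≤ a₀ / (q : ℝ) ^ 2) →
        ∀ n : ℕ, 2 ≤ n → n ≤ N →
        ∀ q : ℤ, q ≠ 0 →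
          ‖Sconv P n q‖ ≤ |(q : ℝ)| ^ (-((1 : ℝ) + (4 : ℝ) ^ (-((n : ℝ) - 1)))) := by
  classical
  set K : ℝ := ∑' q : ℤ, |(q:ℝ)| ^ (-(3/2) : ℝ) with hKdef
  have hKnn : 0 ≤ K := tsum_nonneg fun q => Real.rpow_nonneg (abs_nonneg _) _
  set δ : ℝ := min (1/8) (1/(8*a₀)) with hδdef
  have hδpos : 0 < δ := lt_min (by norm_num) (by positivity)
  have hδ8 : δ ≤ 1/8 := min_le_left _ _
  have hδa : δ ≤ 1/(8*a₀) := min_le_right _ _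
  set c : ℝ := 1 + a₀ ^ ((3:ℝ)/4) * K with hcdef
  have hcpos : (0:ℝ) < c := by
    have h0 : 0 ≤ a₀ ^ ((3:ℝ)/4) * K := mul_nonneg (Real.rpow_nonneg ha₀.le _) hKnn
    rw [hcdef]
    linarith
  set ε₀ : ℝ := min (1/2) ((δ/c)^(4:ℕ)) with hε₀def
  have hε₀pos : 0 < ε₀ := lt_min (by norm_num) (by positivity)
  refine ⟨ε₀, ⟨hε₀pos, lt_of_le_of_lt (min_le_left _ _) (by norm_num)⟩, ?_⟩
  rintro ε ⟨hεpos, hεle⟩ P hPsup hPd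
  have hε1 : ε ≤ 1 := hεle.trans ((min_le_left _ _).trans (by norm_num))
  obtain ⟨hPsum, hPle⟩ := Pl1 ε a₀ hεpos hε1 ha₀ P hPsup hPd
  set L : ℝ := ∑' q : ℤ, ‖P q‖ with hLdef
  have hLnn : 0 ≤ L := tsum_nonneg fun q => norm_nonneg _
  have hLδ : L ≤ δ := by
    have h14 : ε ^ ((1:ℝ)/4) ≤ δ/c := by
      have hεle4 : ε ≤ (δ/c)^(4:ℕ) := hεle.trans (min_le_right _ _)
      have hdc : (0:ℝ) < δ/c := div_pos hδpos hcpos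
      calc ε ^ ((1:ℝ)/4) ≤ ((δ/c)^(4:ℕ)) ^ ((1:ℝ)/4) :=
            Real.rpow_le_rpow hεpos.le hεle4 (by norm_num)
        _ = δ/c := by
            rw [← Real.rpow_natCast (δ/c) 4, ← Real.rpow_mul hdc.le]
            norm_num
    calc L ≤ ε ^ ((1:ℝ)/4) * c := hPle
      _ ≤ (δ/c) * c := mul_le_mul_of_nonneg_right h14 hcpos.le
      _ = δ := div_mul_cancel₀ δ (ne_of_gt hcpos)
  have hL8 : L ≤ 1/8 := hLδ.trans hδ8
  have hL1 : L ≤ 1 := hL8.trans (by norm_num)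
  have hLa : 8 * a₀ * L ≤ 1 := by
    have : L ≤ 1/(8*a₀) := hLδ.trans hδa
    have h8a : (0:ℝ) < 8 * a₀ := by positivity
    calc 8 * a₀ * L ≤ 8 * a₀ * (1/(8*a₀)) := mul_le_mul_of_nonneg_left this h8a.le
      _ = 1 := by field_simp
  -- the invariant
  have inv : ∀ m : ℕ, (Summable fun q : ℤ => ‖Sconv P (m+1) q‖) ∧
      (∑' q : ℤ, ‖Sconv P (m+1) q‖ ≤ L) ∧
      (∀ q : ℤ, q ≠ 0 → ‖Sconv P (m+1) q‖ ≤ a₀ / (q:ℝ)^2) := by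
    intro m
    induction m with
    | zero => exact ⟨hPsum, le_refl L, hPd⟩
    | succ m ih =>
      obtain ⟨hS, hSl, hSd⟩ := ih
      obtain ⟨c1, c2, c3⟩ := conv_bound P (Sconv P (m+1)) hPsum hS a₀ a₀ ha₀.le ha₀.le hPd hSd
      have hconv : Sconv P (m+2) = fun q => ∑' k : ℤ, P (q - k) * Sconv P (m+1) k := rfl
      have hLS : (0:ℝ) ≤ ∑' q : ℤ, ‖Sconv P (m+1) q‖ := tsum_nonneg fun q => norm_nonneg _
      refine ⟨by rw [hconv]; exact c1, ?_, ?_⟩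
      · rw [hconv]
        calc (∑' q : ℤ, ‖∑' k : ℤ, P (q - k) * Sconv P (m+1) k‖)
            ≤ L * (∑' q : ℤ, ‖Sconv P (m+1) q‖) := c2
          _ ≤ 1 * (∑' q : ℤ, ‖Sconv P (m+1) q‖) := mul_le_mul_of_nonneg_right hL1 hLS
          _ = ∑' q : ℤ, ‖Sconv P (m+1) q‖ := one_mul _
          _ ≤ L := hSl
      · intro q hq
        have hq2 : (0:ℝ) < (q:ℝ)^2 := by
          have : (q:ℝ) ≠ 0 := Int.cast_ne_zero.mpr hq
          positivity
        rw [hconv]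
        calc ‖∑' k : ℤ, P (q - k) * Sconv P (m+1) k‖
            ≤ 4 / (q:ℝ)^2 * (a₀ * L + a₀ * (∑' q : ℤ, ‖Sconv P (m+1) q‖)) := c3 q hq
          _ ≤ a₀ / (q:ℝ)^2 := by
              rw [div_mul_eq_mul_div, div_le_div_iff₀ hq2 hq2]
              have h1 : a₀ * L ≤ a₀ * (1/8) := mul_le_mul_of_nonneg_left hL8 ha₀.le
              have h2 : a₀ * (∑' q : ℤ, ‖Sconv P (m+1) q‖) ≤ a₀ * (1/8) :=
                mul_le_mul_of_nonneg_left (hSl.trans hL8) ha₀.le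
              have hnum : 4 * (a₀ * L + a₀ * (∑' q : ℤ, ‖Sconv P (m+1) q‖)) ≤ a₀ := by
                linarith
              have := mul_le_mul_of_nonneg_right hnum hq2.le
              linarith
  -- conclusion
  intro n hn2 hnN q hq
  obtain ⟨m, rfl⟩ : ∃ m, n = m + 2 := ⟨n - 2, by omega⟩
  obtain ⟨hS, hSl, hSd⟩ := inv m
  have c3 := (conv_bound P (Sconv P (m+1)) hPsum hS a₀ a₀ ha₀.le ha₀.le hPd hSd).2.2 q hq
  have hconv : Sconv P (m+2) = fun q => ∑' k : ℤ, P (q - k) * Sconv P (m+1) k := rfl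
  have hq2 : (0:ℝ) < (q:ℝ)^2 := by
    have : (q:ℝ) ≠ 0 := Int.cast_ne_zero.mpr hq
    positivity
  have habs1 : (1:ℝ) ≤ |(q:ℝ)| := by
    have := Int.one_le_abs hq
    calc (1:ℝ) ≤ ((|q| : ℤ) : ℝ) := by exact_mod_cast this
      _ = |(q:ℝ)| := by rw [Int.cast_abs]
  have step1 : ‖Sconv P (m+2) q‖ ≤ 1 / (q:ℝ)^2 := by
    rw [hconv]
    calc ‖∑' k : ℤ, P (q - k) * Sconv P (m+1) k‖
        ≤ 4 / (q:ℝ)^2 * (a₀ * L + a₀ * (∑' q : ℤ, ‖Sconv P (m+1) q‖)) := c3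
      _ ≤ 1 / (q:ℝ)^2 := by
          rw [div_mul_eq_mul_div, div_le_div_iff₀ hq2 hq2]
          have h2 : a₀ * (∑' q : ℤ, ‖Sconv P (m+1) q‖) ≤ a₀ * L :=
            mul_le_mul_of_nonneg_left hSl ha₀.le
          have hnum : 4 * (a₀ * L + a₀ * (∑' q : ℤ, ‖Sconv P (m+1) q‖)) ≤ 1 := by
            linarith
          have := mul_le_mul_of_nonneg_right hnum hq2.le
          linarith
  have step2 : 1 / (q:ℝ)^2 = |(q:ℝ)| ^ (-(2:ℝ)) := by
    rw [Real.rpow_neg (abs_nonneg _), show ((2:ℝ)) = ((2:ℕ):ℝ) by norm_num,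
      Real.rpow_natCast, sq_abs, one_div]
  have ht : -(((m+2 : ℕ) : ℝ) - 1) ≤ 0 := by
    push_cast
    linarith [Nat.cast_nonneg (α := ℝ) m]
  have h4 : (4:ℝ) ^ (-(((m+2 : ℕ) : ℝ) - 1)) ≤ 1 :=
    Real.rpow_le_one_of_one_le_of_nonpos (by norm_num) ht
  have h4nn : (0:ℝ) ≤ (4:ℝ) ^ (-(((m+2 : ℕ) : ℝ) - 1)) := Real.rpow_nonneg (by norm_num) _
  have step3 : |(q:ℝ)| ^ (-(2:ℝ)) ≤
      |(q : ℝ)| ^ (-((1 : ℝ) + (4 : ℝ) ^ (-(((m+2 : ℕ) : ℝ) - 1)))) := by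
    apply Real.rpow_le_rpow_of_exponent_le habs1
    linarith
  calc ‖Sconv P (m+2) q‖ ≤ 1 / (q:ℝ)^2 := step1
    _ = |(q:ℝ)| ^ (-(2:ℝ)) := step2
    _ ≤ |(q : ℝ)| ^ (-((1 : ℝ) + (4 : ℝ) ^ (-(((m+2 : ℕ) : ℝ) - 1)))) := step3
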